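/- Let $\hat{y}, \mu, y_A, \bar{y} \in \mathbb{R}^k$ with $\alpha := \frac{(\bar{y}-\mu)^T(\bar{y}-\hat{y})}{\|\bar{y}-\hat{y}\|^2} \in (0,1)$, $\hat{y}\neq\bar{y}$, and let $\bar{y}' := \frac{y_A - \alpha\zeta}{1-\alpha}$ be the attacker's best response. Then $\bar{y}' - \zeta = \frac{\|\hat{y}-\bar{y}\|^2}{(\hat{y}-\mu)^T(\hat{y}-\bar{y})}\,(y_A - \zeta)$, provided $(\hat{y}-\mu)^T(\hat{y}-\bar{y}) \neq 0$. -/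

import Mathlib

open RealInnerProductSpace

/-- one full round of the iterated best response maps `ȳ` (with
mixed sensor response `α ∈ (0,1)`) to a point `ȳ'` with
`ȳ' - ζ = (‖ŷ-ȳ‖² / ⟪ŷ-μ, ŷ-ȳ⟫) (y_A - ζ)`. -/
theorem stmt17 {k : ℕ} (yhat mu yA ybar zeta : EuclideanSpace ℝ (Fin k))
    (hne : yhat ≠ ybar)
    (α : ℝ) (hα : α = ⟪ybar - mu, ybar - yhat⟫ / ‖ybar - yhat‖ ^ 2)
    (hmixed : α ∈ Set.Ioo (0 : ℝ) 1)
    (hden : ⟪yhat - mu, yhat - ybar⟫ ≠ 0)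
    (ybar' : EuclideanSpace ℝ (Fin k))
    (hbr : ybar' = (1 - α)⁻¹ • (yA - α • zeta)) :
    ybar' - zeta = (‖yhat - ybar‖ ^ 2 / ⟪yhat - mu, yhat - ybar⟫) • (yA - zeta) := by
  have hNne : ‖ybar - yhat‖ ^ 2 ≠ 0 := by
    have : ybar - yhat ≠ 0 := sub_ne_zero.mpr (Ne.symm hne)
    exact pow_ne_zero _ (norm_ne_zero_iff.mpr this)
  have hnorm : ‖yhat - ybar‖ = ‖ybar - yhat‖ := norm_sub_rev _ _
  have hkey : ⟪yhat - mu, yhat - ybar⟫ = ‖ybar - yhat‖ ^ 2 - ⟪ybar - mu, ybar - yhat⟫ := by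
    have h1 : yhat - mu = (yhat - ybar) + (ybar - mu) := by abel
    rw [h1, inner_add_left, real_inner_self_eq_norm_sq, hnorm,
      show yhat - ybar = -(ybar - yhat) from (neg_sub _ _).symm, inner_neg_right]
    ring
  have h1α : 1 - α = ⟪yhat - mu, yhat - ybar⟫ / ‖ybar - yhat‖ ^ 2 := by
    rw [hα, hkey]; rw [sub_div, div_self hNne]
  have h1αne : (1 : ℝ) - α ≠ 0 := by
    have := hmixed.2; linarith
  have hstep : ybar' - zeta = (1 - α)⁻¹ • (yA - zeta) := by
    rw [hbr]
    match_scalars <;> field_simp <;> ring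
  rw [hstep, h1α, inv_div, hnorm]
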